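/- Any two closed antipodal curves on the 2-sphere intersect. Precisely: if f, g : ℝ → S² are continuous, periodic maps (say f(t+1)=f(t) and g(t+1)=g(t) for all t) whose images are each closed under the antipodal map x ↦ −x, then the images of f and g have a common point. -/

import Mathlib

open Complex Set

/-- Continuous function taking integer values on an interval has equal endpoint values. -/
lemma AC_int_const {ψ : ℝ → ℝ} (hψ : Continuous ψ) {a b : ℝ} (hab : a ≤ b)
    (hint : ∀ t ∈ Icc a b, ∃ n : ℤ, ψ t = n) : ψ a = ψ b := by
  by_contra hne
  obtain ⟨na, hna⟩ := hint a ⟨le_refl a, hab⟩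
  obtain ⟨nb, hnb⟩ := hint b ⟨hab, le_refl b⟩
  rcases lt_trichotomy (ψ a) (ψ b) with h | h | h
  · have hn : na < nb := by exact_mod_cast hna ▸ hnb ▸ h
    have hc : ((na : ℝ) + 1/2) ∈ Icc (ψ a) (ψ b) := by
      constructor
      · rw [hna]; linarith
      · rw [hnb]
        have : (na : ℝ) + 1 ≤ nb := by exact_mod_cast hn
        linarith
    obtain ⟨t, ht, hψt⟩ := intermediate_value_Icc hab hψ.continuousOn hc
    obtain ⟨m, hm⟩ := hint t ht
    rw [hm] at hψt
    have : (2*m : ℝ) = 2*na + 1 := by linarith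
    have : (2*m : ℤ) = 2*na + 1 := by exact_mod_cast this
    omega
  · exact hne h
  · have hn : nb < na := by exact_mod_cast hnb ▸ hna ▸ h
    have hc : ((nb : ℝ) + 1/2) ∈ Icc (ψ b) (ψ a) := by
      constructor
      · rw [hnb]; linarith
      · rw [hna]
        have : (nb : ℝ) + 1 ≤ na := by exact_mod_cast hn
        linarith
    obtain ⟨t, ht, hψt⟩ := intermediate_value_Icc' hab hψ.continuousOn hc
    obtain ⟨m, hm⟩ := hint t ht
    rw [hm] at hψt
    have : (2*m : ℝ) = 2*nb + 1 := by linarith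
    have : (2*m : ℤ) = 2*nb + 1 := by exact_mod_cast this
    omega

/-- Two continuous exp-lifts of the same map have equal increments (of imaginary part). -/
lemma AC_lift_unique {u θ₁ θ₂ : ℝ → ℂ} (h₁ : Continuous θ₁) (h₂ : Continuous θ₂)
    (e₁ : ∀ t, Complex.exp (θ₁ t) = u t) (e₂ : ∀ t, Complex.exp (θ₂ t) = u t)
    {a b : ℝ} (hab : a ≤ b) : (θ₁ b - θ₁ a).im = (θ₂ b - θ₂ a).im := by
  have key : ∀ t, ∃ n : ℤ, (θ₁ t - θ₂ t).im / (2 * Real.pi) = n := by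
    intro t
    have h : Complex.exp (θ₁ t - θ₂ t) = 1 := by
      rw [Complex.exp_sub, e₁, e₂, div_self]
      rw [← e₁ t]; exact Complex.exp_ne_zero _
    obtain ⟨n, hn⟩ := Complex.exp_eq_one_iff.mp h
    refine ⟨n, ?_⟩
    rw [hn]
    have : ((n : ℂ) * (2 * Real.pi * Complex.I)).im = n * (2 * Real.pi) := by
      simp [Complex.mul_im]
    rw [this]
    field_simp
  have hcont : Continuous fun t => (θ₁ t - θ₂ t).im / (2 * Real.pi) :=
    (Complex.continuous_im.comp (h₁.sub h₂)).div_const _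
  have heq := AC_int_const hcont hab (fun t _ => key t)
  have hpi : (2 * Real.pi) ≠ 0 := by positivity
  have h1 : (θ₁ a - θ₂ a).im = (θ₁ b - θ₂ b).im := by
    field_simp at heq
    exact heq
  simp only [Complex.sub_im] at h1 ⊢
  linarith

/-- Existence of a continuous logarithm along a clamped continuous nonvanishing map. -/
lemma AC_lift_exists {L : ℝ} (hL : 0 ≤ L) (u : ℝ → ℂ) (hu : Continuous u)
    (h0 : ∀ t, u t ≠ 0) (hc : ∀ t, u (max 0 (min L t)) = u t) :
    ∃ θ : ℝ → ℂ, Continuous θ ∧ ∀ t, Complex.exp (θ t) = u t := by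
  -- minimum modulus on [0, L]
  obtain ⟨tm, htm, hmin⟩ := isCompact_Icc.exists_isMinOn (Set.nonempty_Icc.mpr hL)
    (hu.norm.continuousOn : ContinuousOn (fun t => ‖u t‖) (Icc 0 L))
  set m : ℝ := ‖u tm‖ with hm
  have hmpos : 0 < m := norm_pos_iff.mpr (h0 tm)
  have hglobal : ∀ t, m ≤ ‖u t‖ := by
    intro t
    rw [← hc t]
    exact hmin ⟨le_max_left _ _, max_le hL (min_le_left _ _)⟩
  -- uniform continuity on [0, L]
  have huc := isCompact_Icc.uniformContinuousOn_of_continuous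
    (hu.continuousOn : ContinuousOn u (Icc 0 L))
  rw [Metric.uniformContinuousOn_iff] at huc
  obtain ⟨δ, hδpos, hδ⟩ := huc m hmpos
  -- clamp is 1-Lipschitz; global modulus of continuity
  have hclamp_mem : ∀ t : ℝ, max 0 (min L t) ∈ Icc 0 L :=
    fun t => ⟨le_max_left _ _, max_le hL (min_le_left _ _)⟩
  have hlip : ∀ s t : ℝ, |max 0 (min L s) - max 0 (min L t)| ≤ |s - t| := by
    intro s t
    calc |max 0 (min L s) - max 0 (min L t)|
        = |max (min L s) 0 - max (min L t) 0| := by rw [max_comm 0, max_comm 0]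
      _ ≤ |min L s - min L t| := abs_max_sub_max_le_abs _ _ _
      _ ≤ max |L - L| |s - t| := abs_min_sub_min_le_max _ _ _ _
      _ ≤ |s - t| := by simp
  have hg : ∀ s t : ℝ, |s - t| < δ → ‖u s - u t‖ < m := by
    intro s t hst
    rw [← hc s, ← hc t]
    have := hδ _ (hclamp_mem s) _ (hclamp_mem t)
      (lt_of_le_of_lt (hlip s t) hst : dist (max 0 (min L s)) (max 0 (min L t)) < δ)
    rwa [dist_eq_norm] at this
  -- step size
  set d : ℝ := δ / 2 with hd
  have hdpos : 0 < d := by positivity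
  -- inductive construction
  have main : ∀ k : ℕ, ∃ θ : ℝ → ℂ, Continuous θ ∧ ∀ t ≤ (k : ℝ) * d, Complex.exp (θ t) = u t := by
    intro k
    induction k with
    | zero =>
      refine ⟨fun _ => Complex.log (u 0), continuous_const, fun t ht => ?_⟩
      have h1 : u t = u 0 := by
        rw [← hc t]
        norm_num at ht
        rw [min_eq_right (le_trans ht hL), max_eq_left (by linarith)]
      rw [h1, Complex.exp_log (h0 0)]
    | succ k ih =>
      obtain ⟨θ, hθc, hθ⟩ := ih
      set a : ℝ := (k : ℝ) * d with ha
      set cl : ℝ → ℝ := fun t => max a (min (a + d) t) with hcl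
      have hclcont : Continuous cl :=
        continuous_const.max ((continuous_const.min continuous_id))
      have hclmem : ∀ t, a ≤ cl t ∧ cl t ≤ a + d :=
        fun t => ⟨le_max_left _ _, max_le (by linarith) (min_le_left _ _)⟩
      have hratio : ∀ t, ‖u (cl t) / u a - 1‖ < 1 := by
        intro t
        have h1 : |cl t - a| < δ := by
          rcases hclmem t with ⟨h2, h3⟩
          rw [_root_.abs_of_nonneg (by linarith : (0:ℝ) ≤ cl t - a)]
          linarith
        have h2 := hg (cl t) a h1
        rw [div_sub_one (h0 a), norm_div]
        rw [div_lt_one (norm_pos_iff.mpr (h0 a))]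
        exact lt_of_lt_of_le h2 (hglobal a)
      have hslit : ∀ t, u (cl t) / u a ∈ Complex.slitPlane := by
        intro t
        apply Complex.mem_slitPlane_iff.mpr
        left
        have := hratio t
        have h1 : |(u (cl t) / u a - 1).re| ≤ ‖u (cl t) / u a - 1‖ := Complex.abs_re_le_norm _
        have h2 : (u (cl t) / u a - 1).re = (u (cl t) / u a).re - 1 := by simp
        rw [h2] at h1
        have := abs_le.mp h1
        linarith [this.1]
      set br : ℝ → ℂ := fun t => θ a + Complex.log (u (cl t) / u a) with hbr
      have hbrc : Continuous br := by
        apply continuous_const.add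
        exact ((hu.comp hclcont).div_const _).clog (fun t => hslit t)
      refine ⟨fun t => if t ≤ a then θ t else br t, ?_, ?_⟩
      · apply Continuous.if_le hθc hbrc continuous_id continuous_const
        intro x hx
        have hxa : x = a := hx
        have h1 : cl a = a := by
          rw [show cl a = max a (min (a + d) a) from rfl,
            min_eq_right (by linarith), max_self]
        rw [hxa, show br a = θ a + Complex.log (u (cl a) / u a) from rfl, h1,
          div_self (h0 a), Complex.log_one, add_zero]
      · intro t ht
        by_cases h : t ≤ a
        · simp only [h, if_true]
          exact hθ t h
        · simp only [h, if_false]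
          push_neg at h
          have htd : t ≤ a + d := by
            push_cast at ht; rw [ha]; linarith
          have h1 : cl t = t := by
            rw [show cl t = max a (min (a + d) t) from rfl, min_eq_right htd,
              max_eq_right h.le]
          show cexp (θ a + Complex.log (u (cl t) / u a)) = u t
          rw [Complex.exp_add, Complex.exp_log (div_ne_zero (h0 (cl t)) (h0 a)), hθ a le_rfl, h1,
            ← mul_div_assoc]
          exact mul_div_cancel_left₀ _ (h0 a)
  -- conclude
  obtain ⟨K, hK⟩ := exists_nat_ge (L / d)
  have hLK : L ≤ (K : ℝ) * d := by
    rw [div_le_iff₀ hdpos] at hK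
    linarith
  obtain ⟨θ, hθc, hθ⟩ := main K
  refine ⟨fun t => θ (min t L), hθc.comp (continuous_id.min continuous_const), fun t => ?_⟩
  rw [hθ _ (le_trans (min_le_right t L) hLK)]
  rw [← hc (min t L), ← hc t]
  congr 1
  rw [min_comm t L, ← min_assoc, min_self]

noncomputable def ACsig (x : EuclideanSpace ℝ (Fin 3)) : ℂ :=
  ((x 0 : ℂ) + (x 1 : ℂ) * Complex.I) / ((1 : ℂ) - (x 2 : ℂ))

lemma AC_sumsq {x : EuclideanSpace ℝ (Fin 3)} (hx : ‖x‖ = 1) :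
    x 0 ^ 2 + x 1 ^ 2 + x 2 ^ 2 = 1 := by
  have h := EuclideanSpace.norm_eq x
  rw [hx] at h
  have hnn : 0 ≤ ∑ i : Fin 3, ‖x i‖ ^ 2 := Finset.sum_nonneg (by intros; positivity)
  have h2 : (∑ i : Fin 3, ‖x i‖ ^ 2) = 1 := by
    nlinarith [Real.sq_sqrt hnn]
  simpa [Fin.sum_univ_three, sq_abs, Real.norm_eq_abs] using h2

lemma AC_denom_ne {x : EuclideanSpace ℝ (Fin 3)} (h : x 2 < 1) :
    (1 : ℂ) - (x 2 : ℂ) ≠ 0 := by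
  intro hc
  have h2 := congrArg Complex.re hc
  simp at h2
  linarith

lemma AC_coord2_lt {x : EuclideanSpace ℝ (Fin 3)} (hx : ‖x‖ = 1)
    (hne : x ≠ EuclideanSpace.single (2 : Fin 3) (1 : ℝ)) : x 2 < 1 := by
  have hs := AC_sumsq hx
  rcases lt_or_ge (x 2) 1 with h | h
  · exact h
  · exfalso
    have h2 : x 2 = 1 := by nlinarith
    have h0 : x 0 = 0 := by nlinarith
    have h1 : x 1 = 0 := by nlinarith
    apply hne
    ext i
    fin_cases i <;> simp [EuclideanSpace.single_apply, h0, h1, h2]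

lemma AC_coord2_gt {x : EuclideanSpace ℝ (Fin 3)} (hx : ‖x‖ = 1)
    (hne : x ≠ -EuclideanSpace.single (2 : Fin 3) (1 : ℝ)) : -1 < x 2 := by
  have hs := AC_sumsq hx
  rcases lt_or_ge (-1) (x 2) with h | h
  · exact h
  · exfalso
    have h2 : x 2 = -1 := by nlinarith
    have h0 : x 0 = 0 := by nlinarith
    have h1 : x 1 = 0 := by nlinarith
    apply hne
    ext i
    fin_cases i <;> simp [EuclideanSpace.single_apply, h0, h1, h2]

lemma AC_sig_ne_zero {x : EuclideanSpace ℝ (Fin 3)} (hx : ‖x‖ = 1)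
    (hlt : x 2 < 1) (hgt : -1 < x 2) : ACsig x ≠ 0 := by
  have hs := AC_sumsq hx
  intro hc
  rw [ACsig, div_eq_zero_iff] at hc
  rcases hc with hc | hc
  · have h0 : x 0 = 0 ∧ x 1 = 0 := by
      constructor
      · have := congrArg Complex.re hc; simpa using this
      · have := congrArg Complex.im hc; simpa using this
    nlinarith [h0.1, h0.2]
  · exact AC_denom_ne hlt hc

lemma AC_sig_inj {x y : EuclideanSpace ℝ (Fin 3)} (hx : ‖x‖ = 1) (hy : ‖y‖ = 1)
    (hx2 : x 2 < 1) (hy2 : y 2 < 1) (h : ACsig x = ACsig y) : x = y := by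
  have hsx := AC_sumsq hx
  have hsy := AC_sumsq hy
  rw [ACsig, ACsig, div_eq_div_iff (AC_denom_ne hx2) (AC_denom_ne hy2)] at h
  have hre := congrArg Complex.re h
  have him := congrArg Complex.im h
  simp [Complex.add_re, Complex.add_im, Complex.mul_re, Complex.mul_im] at hre him
  -- hre : x 0 * (1 - y 2) = y 0 * (1 - x 2), him similar
  have hre2 : (x 0 * (1 - y 2))^2 = (y 0 * (1 - x 2))^2 := by rw [hre]
  have him2 : (x 1 * (1 - y 2))^2 = (y 1 * (1 - x 2))^2 := by rw [him]
  have e1 : (1 - x 2^2) * (1 - y 2)^2 = (1 - y 2^2) * (1 - x 2)^2 := by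
    linear_combination (-(1 - y 2)^2) * hsx + hre2 + him2 + (1 - x 2)^2 * hsy
  have key : (x 2 - y 2) * (2 * ((1 - x 2) * (1 - y 2))) = 0 := by linear_combination e1
  have hAB : (0:ℝ) < 2 * ((1 - x 2) * (1 - y 2)) := by nlinarith
  have h2 : x 2 = y 2 := by
    rcases mul_eq_zero.mp key with h | h
    · linarith [sub_eq_zero.mp h]
    · linarith
  rw [← h2] at hre him
  have hne : (1 : ℝ) - x 2 ≠ 0 := by linarith
  have h0 : x 0 = y 0 := mul_right_cancel₀ hne hre
  have h1 : x 1 = y 1 := mul_right_cancel₀ hne him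
  ext i
  fin_cases i <;> assumption

lemma AC_sig_neg {x : EuclideanSpace ℝ (Fin 3)} (hlt : x 2 < 1) (hgt : -1 < x 2) :
    ACsig (-x) = -(((1 - x 2) / (1 + x 2) : ℝ) : ℂ) * ACsig x := by
  have hneg : ∀ i : Fin 3, (-x : EuclideanSpace ℝ (Fin 3)) i = -(x i) := fun i => rfl
  rw [ACsig, ACsig]
  rw [hneg 0, hneg 1, hneg 2]
  have d1 : (1 : ℂ) - ((-(x 2) : ℝ) : ℂ) = (1 : ℂ) + (x 2 : ℂ) := by push_cast; ring
  rw [d1]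
  have h1 : (1 : ℂ) + (x 2 : ℂ) ≠ 0 := by
    intro hc
    have := congrArg Complex.re hc
    simp at this
    linarith
  have h2 : (1 : ℂ) - ((x 2 : ℝ) : ℂ) ≠ 0 := AC_denom_ne hlt
  have h3 : (1 : ℂ) - ((x 2 : ℝ) : ℂ)^2 ≠ 0 := by
    have he : (1 : ℂ) - ((x 2 : ℝ) : ℂ)^2 = ((1:ℂ) - (x 2 : ℂ)) * ((1:ℂ) + (x 2 : ℂ)) := by ring
    rw [he]
    exact mul_ne_zero h2 h1
  push_cast
  field_simp [h1, h2, h3]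
  ring

lemma AC_sig_normSq {x : EuclideanSpace ℝ (Fin 3)} (hx : ‖x‖ = 1) (hlt : x 2 < 1) :
    ‖ACsig x‖ ^ 2 = (1 + x 2) / (1 - x 2) := by
  have hs := AC_sumsq hx
  rw [ACsig, norm_div, div_pow, Complex.sq_norm, Complex.sq_norm]
  have e1 : ((x 0 : ℂ) + (x 1 : ℂ) * Complex.I) = Complex.mk (x 0) (x 1) := by
    apply Complex.ext <;> simp
  have e2 : Complex.normSq ((x 0 : ℂ) + (x 1 : ℂ) * Complex.I) = x 0 ^ 2 + x 1 ^ 2 := by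
    rw [Complex.normSq_add_mul_I]
  have e3 : Complex.normSq ((1 : ℂ) - (x 2 : ℂ)) = (1 - x 2) ^ 2 := by
    have : (1 : ℂ) - (x 2 : ℂ) = ((1 - x 2 : ℝ) : ℂ) := by push_cast; ring
    rw [this, Complex.normSq_ofReal]; ring
  rw [e2, e3]
  have hne : (1 - x 2) ≠ 0 := by linarith
  field_simp
  nlinarith

lemma AC_sig_cont {X : Type*} [TopologicalSpace X] {c : X → EuclideanSpace ℝ (Fin 3)}
    (hc : Continuous c) (h2 : ∀ t, (c t) 2 < 1) :
    Continuous fun t => ACsig (c t) := by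
  have hcoord : ∀ i : Fin 3, Continuous fun t => (c t) i := by
    intro i
    exact ((EuclideanSpace.proj i).continuous).comp hc
  apply Continuous.div
  · exact ((Complex.continuous_ofReal.comp (hcoord 0)).add
      ((Complex.continuous_ofReal.comp (hcoord 1)).mul continuous_const))
  · exact continuous_const.sub (Complex.continuous_ofReal.comp (hcoord 2))
  · intro t
    exact AC_denom_ne (h2 t)

lemma AC_slit_of_close {a b : ℂ} (h : ‖a - b‖ < ‖b‖) :
    a / b ∈ Complex.slitPlane := by
  have hb : b ≠ 0 := by
    intro hc
    subst hc
    simp only [sub_zero, norm_zero] at h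
    exact absurd h (by positivity : (0:ℝ) ≤ ‖a‖).not_gt
  have h1 : ‖a / b - 1‖ < 1 := by
    rw [div_sub_one hb, norm_div]
    rw [div_lt_one (norm_pos_iff.mpr hb)]
    exact h
  apply Complex.mem_slitPlane_iff.mpr
  left
  have h2 : |(a / b - 1).re| ≤ ‖a / b - 1‖ := Complex.abs_re_le_norm _
  have h3 : (a / b - 1).re = (a / b).re - 1 := by simp
  rw [h3] at h2
  have h5 := abs_lt.mp (lt_of_le_of_lt h2 h1)
  linarith [h5.1]

set_option maxHeartbeats 1000000 in
lemma AC_core (f g : ℝ → EuclideanSpace ℝ (Fin 3))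
    (hf : Continuous f) (hg : Continuous g)
    (hfs : ∀ t, ‖f t‖ = 1) (hgs : ∀ t, ‖g t‖ = 1)
    (hfa : ∀ x ∈ Set.range f, -x ∈ Set.range f)
    (hga : ∀ x ∈ Set.range g, -x ∈ Set.range g)
    (hg0 : g 0 = EuclideanSpace.single (2 : Fin 3) (1 : ℝ))
    (hdisj : ∀ t s, f t ≠ g s) : False := by
  set p : EuclideanSpace ℝ (Fin 3) := EuclideanSpace.single (2 : Fin 3) (1 : ℝ) with hp
  -- basic facts about range f
  obtain ⟨r₁, hr₁⟩ : ∃ r, g r = -p := by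
    have := hga (g 0) ⟨0, rfl⟩
    rw [hg0] at this
    exact this
  have hrangef : ∀ t : ℝ, (f t) 2 < 1 ∧ -1 < (f t) 2 := by
    intro t
    constructor
    · exact AC_coord2_lt (hfs t) (fun hc => hdisj t 0 (hc.trans hg0.symm))
    · exact AC_coord2_gt (hfs t) (fun hc => hdisj t r₁ (hc.trans hr₁.symm))
  -- the antipodal loop in range f
  obtain ⟨t₁, ht₁⟩ : ∃ t, f t = -(f 0) := hfa (f 0) ⟨0, rfl⟩
  set α : ℝ → EuclideanSpace ℝ (Fin 3) := fun s => f (s * t₁) with hα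
  have hαcont : Continuous α := hf.comp (continuous_id.mul continuous_const)
  have hα0 : α 0 = f 0 := by rw [hα]; simp
  have hα1 : α 1 = -(f 0) := by rw [hα]; simp [ht₁]
  set B : ℝ → EuclideanSpace ℝ (Fin 3) :=
    fun s => if s ≤ 1 then α (max 0 s) else -α (min 1 (s - 1)) with hB
  have hBrange : ∀ s, B s ∈ Set.range f := by
    intro s
    rw [hB]
    by_cases h : s ≤ 1
    · simp only [h, if_true]; exact ⟨max 0 s * t₁, rfl⟩
    · simp only [h, if_false]; exact hfa _ ⟨min 1 (s - 1) * t₁, rfl⟩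
  have hBcont : Continuous B := by
    apply Continuous.if_le (hαcont.comp (continuous_const.max continuous_id))
      ((hαcont.comp (continuous_const.min (continuous_id.sub continuous_const))).neg)
      continuous_id continuous_const
    intro x hx
    have hx1 : x = 1 := hx
    rw [hx1]
    norm_num [hα0, hα1]
  have hBnorm : ∀ s, ‖B s‖ = 1 := by
    intro s
    obtain ⟨t, ht⟩ := hBrange s
    rw [← ht]; exact hfs t
  have hBbd : ∀ s, (B s) 2 < 1 ∧ -1 < (B s) 2 := by
    intro s
    obtain ⟨t, ht⟩ := hBrange s
    rw [← ht]; exact hrangef t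
  have hB0 : B 0 = f 0 := by rw [hB]; norm_num; rw [hα0]
  have hB2 : B 2 = f 0 := by
    rw [hB]
    norm_num
    rw [hα1, neg_neg]
  have hBclamp : ∀ s, B (max 0 (min 2 s)) = B s := by
    intro s
    rcases le_total s 0 with h | h
    · have h1 : max 0 (min 2 s) = 0 := by
        rw [min_eq_right (by linarith), max_eq_left (by linarith)]
      rw [h1, hB]
      have h2 : s ≤ 1 := by linarith
      simp only [h2, if_true, (by norm_num : (0:ℝ) ≤ 1), if_true]
      rw [max_eq_left (by linarith), max_eq_left h]
    · rcases le_total s 2 with h' | h'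
      · rw [min_eq_right h', max_eq_right (by linarith)]
      · have h1 : max 0 (min 2 s) = 2 := by
          rw [min_eq_left h', max_eq_right (by linarith)]
        rw [h1, hB]
        have h2 : ¬((2:ℝ) ≤ 1) := by norm_num
        have h3 : ¬(s ≤ 1) := by push_neg; linarith
        simp only [h2, if_false, h3, if_false]
        congr 1
        rw [min_eq_left (by linarith), min_eq_left (by linarith)]
  have hBfirst : ∀ t, 0 ≤ t → t ≤ 1 → B t = α t := by
    intro t h0 h1
    rw [hB]
    simp only [h1, if_true]
    rw [max_eq_right h0]
  have hBsecond : ∀ t, 0 ≤ t → t ≤ 1 → B (1 + t) = -α t := by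
    intro t h0 h1
    rw [hB]
    rcases eq_or_lt_of_le h0 with h | h
    · have : (1 : ℝ) + t ≤ 1 := by rw [← h]; norm_num
      simp only [this, if_true]
      rw [← h]
      have : max 0 (1 + -0) = (1:ℝ) := by norm_num
      norm_num
      rw [hα1, hα0]
    · have h2 : ¬(1 + t ≤ 1) := by push_neg; linarith
      simp only [h2, if_false]
      congr 1
      rw [add_sub_cancel_left, min_eq_right h1]
  -- the projected loop
  set u₀ : ℝ → ℂ := fun t => ACsig (B t) with hu₀
  have hu₀cont : Continuous u₀ := AC_sig_cont hBcont (fun s => (hBbd s).1)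
  have hu₀ne : ∀ t, u₀ t ≠ 0 :=
    fun t => AC_sig_ne_zero (hBnorm t) (hBbd t).1 (hBbd t).2
  have hu₀clamp : ∀ t, u₀ (max 0 (min 2 t)) = u₀ t := by
    intro t; rw [hu₀]; simp only; rw [hBclamp]
  have hu₀per : u₀ 2 = u₀ 0 := by rw [hu₀]; simp only; rw [hB2, hB0]
  -- the connecting path in range g
  set c : ℝ → EuclideanSpace ℝ (Fin 3) := fun s => g ((1 - s) * r₁) with hc
  have hccont : Continuous c := hg.comp ((continuous_const.sub continuous_id).mul continuous_const)
  have hc0 : c 0 = -p := by rw [hc]; simp [hr₁]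
  have hc1 : c 1 = p := by rw [hc]; simp [hg0]
  set K : Set ℝ := Icc 0 1 ∩ c ⁻¹' {p} with hK
  have hKne : K.Nonempty := ⟨1, ⟨by norm_num, by norm_num⟩, by simp [hc1]⟩
  have hKcl : IsClosed K := isClosed_Icc.inter (isClosed_singleton.preimage hccont)
  have hKbdd : BddBelow K := ⟨0, fun x hx => hx.1.1⟩
  set τ : ℝ := sInf K with hτ
  have hτK : τ ∈ K := hKcl.csInf_mem hKne hKbdd
  have hτ1 : τ ≤ 1 := hτK.1.2
  have hτpos : 0 < τ := by
    rcases eq_or_lt_of_le hτK.1.1 with h | h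
    · exfalso
      have hceq : c τ = p := hτK.2
      rw [← h, hc0] at hceq
      have h2 : -(p 2) = p 2 := congrArg (fun x : EuclideanSpace ℝ (Fin 3) => x 2) hceq
      have hval : p 2 = 1 := by rw [hp]; simp [EuclideanSpace.single_apply]
      rw [hval] at h2
      norm_num at h2
    · exact h
  have hcne : ∀ s, 0 ≤ s → s < τ → c s ≠ p := by
    intro s h0 hsτ hc'
    have : s ∈ K := ⟨⟨h0, by linarith⟩, by simp [hc']⟩
    have := csInf_le hKbdd this
    rw [← hτ] at this
    linarith
  have hclt : ∀ s, 0 ≤ s → s < τ → (c s) 2 < 1 := by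
    intro s h0 hsτ
    exact AC_coord2_lt (by rw [hc]; exact hgs _) (hcne s h0 hsτ)
  -- uniform bound on the loop
  obtain ⟨tM, htM, hM⟩ := isCompact_Icc.exists_isMaxOn (Set.nonempty_Icc.mpr (by norm_num : (0:ℝ) ≤ 2))
    ((continuous_norm.comp hu₀cont).continuousOn :
      ContinuousOn (fun t => ‖u₀ t‖) (Icc 0 2))
  set R : ℝ := ‖u₀ tM‖ + 1 with hR
  have hRpos : 1 ≤ R := by
    rw [hR]
    have : 0 ≤ ‖u₀ tM‖ := by positivity
    linarith
  have hRbound : ∀ t, ‖u₀ t‖ < R := by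
    intro t
    have h1 : ‖u₀ (max 0 (min 2 t))‖ ≤ ‖u₀ tM‖ := by
      apply hM
      constructor
      · exact le_max_left _ _
      · exact max_le (by norm_num) (min_le_left _ _)
    rw [hu₀clamp t] at h1
    rw [hR]
    linarith
  -- choose a point where |W| is large
  have hcτ2 : (c τ) 2 = 1 := by
    have hceq : c τ = p := hτK.2
    rw [hceq, hp]
    simp [EuclideanSpace.single_apply]
  have hψcont : Continuous fun s => (c s) 2 :=
    (EuclideanSpace.proj (2 : Fin 3)).continuous.comp hccont
  set ζ : ℝ := (R ^ 2 - 1) / (R ^ 2 + 1) with hζ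
  have hRsq : (0:ℝ) < R ^ 2 + 1 := by positivity
  have hεpos : 0 < 1 - ζ := by
    rw [hζ, sub_pos, div_lt_one hRsq]
    linarith
  obtain ⟨δ, hδpos, hδ⟩ := Metric.continuousAt_iff.mp hψcont.continuousAt (1 - ζ) hεpos
  set s₂ : ℝ := max 0 (τ - δ / 2) with hs₂
  have hs₂0 : 0 ≤ s₂ := le_max_left _ _
  have hs₂τ : s₂ < τ := max_lt hτpos (by linarith)
  have hs₂close : |s₂ - τ| < δ := by
    have h1 : τ - δ / 2 ≤ s₂ := le_max_right _ _
    rw [abs_sub_lt_iff]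
    constructor <;> linarith
  have hζbd : ζ < (c s₂) 2 := by
    have h1 := hδ (by rwa [Real.dist_eq] : dist s₂ τ < δ)
    simp only [Real.dist_eq] at h1
    rw [hcτ2] at h1
    have h2 := (abs_lt.mp h1).1
    linarith
  have hWlarge : R < ‖ACsig (c s₂)‖ := by
    have hn : ‖c s₂‖ = 1 := by rw [hc]; exact hgs _
    have hlt : (c s₂) 2 < 1 := hclt s₂ hs₂0 hs₂τ
    have hsq := AC_sig_normSq hn hlt
    have hζ0 : 0 ≤ ζ := by
      rw [hζ]
      apply div_nonneg _ (le_of_lt hRsq)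
      nlinarith
    have hgt1 : -1 < (c s₂) 2 := by linarith
    have h3 : R ^ 2 - 1 < (c s₂) 2 * (R ^ 2 + 1) := by
      rw [hζ] at hζbd
      exact (div_lt_iff₀ hRsq).mp hζbd
    have key : R ^ 2 < ‖ACsig (c s₂)‖ ^ 2 := by
      rw [hsq, lt_div_iff₀ (by linarith : (0:ℝ) < 1 - (c s₂) 2)]
      nlinarith [h3]
    nlinarith [key, norm_nonneg (ACsig (c s₂)), hRpos]
  -- the moving puncture
  set W : ℝ → ℂ := fun s => ACsig (c (max 0 (min s₂ s))) with hW
  have hclmem : ∀ s : ℝ, 0 ≤ max 0 (min s₂ s) ∧ max 0 (min s₂ s) < τ := by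
    intro s
    refine ⟨le_max_left _ _, ?_⟩
    have h1 : max 0 (min s₂ s) ≤ s₂ := max_le hs₂0 (min_le_left _ _)
    linarith
  have hWcont : Continuous W := by
    apply AC_sig_cont (hccont.comp (continuous_const.max (continuous_const.min continuous_id)))
    intro s
    exact hclt _ (hclmem s).1 (hclmem s).2
  have hW0 : W 0 = 0 := by
    rw [hW]
    simp only
    rw [min_eq_right hs₂0, max_self, hc0, ACsig]
    have h0 : (-p : EuclideanSpace ℝ (Fin 3)) 0 = 0 := by
      rw [show (-p : EuclideanSpace ℝ (Fin 3)) 0 = -(p 0) from rfl, hp]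
      simp [EuclideanSpace.single_apply]
    have h1 : (-p : EuclideanSpace ℝ (Fin 3)) 1 = 0 := by
      rw [show (-p : EuclideanSpace ℝ (Fin 3)) 1 = -(p 1) from rfl, hp]
      simp [EuclideanSpace.single_apply]
    rw [h0, h1]
    simp
  have hWs₂ : R < ‖W s₂‖ := by
    rw [hW]
    simp only
    rw [min_self, max_eq_right hs₂0]
    exact hWlarge
  have hsep : ∀ s t : ℝ, u₀ t - W s ≠ 0 := by
    intro s t h
    have heq : ACsig (B t) = ACsig (c (max 0 (min s₂ s))) := by
      rw [hu₀] at h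
      have := sub_eq_zero.mp h
      exact this
    have hBeq : B t = c (max 0 (min s₂ s)) :=
      AC_sig_inj (hBnorm t) (by rw [hc]; exact hgs _) (hBbd t).1
        (hclt _ (hclmem s).1 (hclmem s).2) heq
    obtain ⟨a, ha⟩ := hBrange t
    exact hdisj a _ (ha.trans hBeq)
  -- lifts and winding numbers
  have hv : ∀ s : ℝ, ∃ θ : ℝ → ℂ, Continuous θ ∧ ∀ t, Complex.exp (θ t) = u₀ t - W s := by
    intro s
    apply AC_lift_exists (by norm_num : (0:ℝ) ≤ 2) _ (hu₀cont.sub continuous_const)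
      (fun t => hsep s t)
    intro t
    show u₀ (max 0 (min 2 t)) - W s = u₀ t - W s
    rw [hu₀clamp t]
  set θf : ℝ → ℝ → ℂ := fun s => (hv s).choose with hθf
  have hθc : ∀ s, Continuous (θf s) := fun s => (hv s).choose_spec.1
  have hθe : ∀ s t, Complex.exp (θf s t) = u₀ t - W s := fun s t => (hv s).choose_spec.2 t
  set ω : ℝ → ℝ := fun s => (θf s 2 - θf s 0).im with hω
  -- ω is locally constant
  have hloc : ∀ x : ℝ, ∃ U : Set ℝ, IsOpen U ∧ x ∈ U ∧ ∀ y ∈ U, ω y = ω x := by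
    intro x
    obtain ⟨tm, htm, hmin⟩ := isCompact_Icc.exists_isMinOn
      (Set.nonempty_Icc.mpr (by norm_num : (0:ℝ) ≤ 2))
      ((continuous_norm.comp (hu₀cont.sub continuous_const)).continuousOn :
        ContinuousOn (fun t => ‖u₀ t - W x‖) (Icc 0 2))
    set ε : ℝ := ‖u₀ tm - W x‖ with hε
    have hεpos' : 0 < ε := by
      rw [hε]
      exact norm_pos_iff.mpr (hsep x tm)
    have hεall : ∀ t, ε ≤ ‖u₀ t - W x‖ := by
      intro t
      have h1 : ε ≤ ‖u₀ (max 0 (min 2 t)) - W x‖ :=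
        hmin ⟨le_max_left 0 (min 2 t), max_le (by norm_num) (min_le_left _ _)⟩
      rwa [hu₀clamp t] at h1
    obtain ⟨δ', hδ'pos, hδ'⟩ := Metric.continuousAt_iff.mp hWcont.continuousAt ε hεpos'
    refine ⟨Metric.ball x δ', Metric.isOpen_ball, Metric.mem_ball_self hδ'pos, ?_⟩
    intro y hy
    have hWyx : ‖W y - W x‖ < ε := by
      have := hδ' hy
      rwa [Complex.dist_eq] at this
    set ρ : ℝ → ℂ := fun t => (u₀ t - W y) / (u₀ t - W x) with hρ
    have hρslit : ∀ t, ρ t ∈ Complex.slitPlane := by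
      intro t
      apply AC_slit_of_close
      have h1 : u₀ t - W y - (u₀ t - W x) = -(W y - W x) := by ring
      rw [h1, norm_neg]
      exact lt_of_lt_of_le hWyx (hεall t)
    have hρcont : Continuous ρ := by
      apply Continuous.div (hu₀cont.sub continuous_const) (hu₀cont.sub continuous_const)
      intro t
      exact hsep x t
    set θ' : ℝ → ℂ := fun t => θf x t + Complex.log (ρ t) with hθ'
    have hθ'cont : Continuous θ' := (hθc x).add (hρcont.clog hρslit)
    have hθ'lift : ∀ t, Complex.exp (θ' t) = u₀ t - W y := by
      intro t
      rw [hθ']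
      simp only
      rw [Complex.exp_add, Complex.exp_log (Complex.slitPlane_ne_zero (hρslit t)), hθe x t, hρ]
      simp only
      rw [mul_comm, div_mul_cancel₀ _ (hsep x t)]
    have h1 : (θf y 2 - θf y 0).im = (θ' 2 - θ' 0).im :=
      AC_lift_unique (hθc y) hθ'cont (hθe y) hθ'lift (by norm_num : (0:ℝ) ≤ 2)
    show (θf y 2 - θf y 0).im = (θf x 2 - θf x 0).im
    rw [h1, hθ']
    simp only
    have hρper : ρ 2 = ρ 0 := by
      rw [hρ]
      simp only
      rw [hu₀per]
    rw [hρper]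
    have h2 : θf x 2 + Complex.log (ρ 0) - (θf x 0 + Complex.log (ρ 0)) =
        θf x 2 - θf x 0 := by ring
    rw [h2]
  have hconst : ω s₂ = ω 0 := by
    have hlc : IsLocallyConstant ω := (IsLocallyConstant.iff_exists_open ω).mpr hloc
    exact hlc.apply_eq_of_preconnectedSpace s₂ 0
  -- winding number at s₂ is zero
  have hωs₂ : ω s₂ = 0 := by
    have hWne : W s₂ ≠ 0 := by
      intro hz
      rw [hz] at hWs₂
      simp at hWs₂
      linarith
    have hWpos : 0 < ‖W s₂‖ := by linarith
    have hslit : ∀ t, (1 - u₀ t / W s₂) ∈ Complex.slitPlane := by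
      intro t
      have hq : ‖u₀ t / W s₂‖ < 1 := by
        rw [norm_div, div_lt_one hWpos]
        exact (hRbound t).trans hWs₂
      apply Complex.mem_slitPlane_iff.mpr
      left
      have h2 : |(u₀ t / W s₂).re| ≤ ‖u₀ t / W s₂‖ := Complex.abs_re_le_norm _
      have h4 : (u₀ t / W s₂).re < 1 := lt_of_le_of_lt (le_trans (le_abs_self _) h2) hq
      rw [Complex.sub_re, Complex.one_re]
      linarith
    set θ' : ℝ → ℂ := fun t => Complex.log (-(W s₂)) + Complex.log (1 - u₀ t / W s₂) with hθ's
    have hθ'c : Continuous θ' :=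
      continuous_const.add ((continuous_const.sub (hu₀cont.div_const _)).clog hslit)
    have hθ'l : ∀ t, Complex.exp (θ' t) = u₀ t - W s₂ := by
      intro t
      show Complex.exp (Complex.log (-(W s₂)) + Complex.log (1 - u₀ t / W s₂)) = _
      rw [Complex.exp_add, Complex.exp_log (neg_ne_zero.mpr hWne),
        Complex.exp_log (Complex.slitPlane_ne_zero (hslit t))]
      field_simp
      ring
    have h1 : ω s₂ = (θ' 2 - θ' 0).im :=
      AC_lift_unique (hθc s₂) hθ'c (hθe s₂) hθ'l (by norm_num : (0:ℝ) ≤ 2)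
    rw [h1]
    have h2 : θ' 2 = θ' 0 := by
      show Complex.log (-(W s₂)) + Complex.log (1 - u₀ 2 / W s₂) =
        Complex.log (-(W s₂)) + Complex.log (1 - u₀ 0 / W s₂)
      rw [hu₀per]
    rw [h2, sub_self]
    rfl
  -- winding number at 0 is nonzero
  have hωne : ω 0 ≠ 0 := by
    have hθ0l : ∀ t, Complex.exp (θf 0 t) = u₀ t := by
      intro t
      rw [hθe 0 t, hW0, sub_zero]
    set φ : ℝ → ℂ := fun t => θf 0 (t + 1) - θf 0 t with hφ
    have hφc : Continuous φ := ((hθc 0).comp (continuous_id.add continuous_const)).sub (hθc 0)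
    have hαbd : ∀ t : ℝ, (α t) 2 < 1 ∧ -1 < (α t) 2 := fun t => hrangef (t * t₁)
    have hαn : ∀ t : ℝ, ‖α t‖ = 1 := fun t => hfs (t * t₁)
    have hkey : ∀ t ∈ Icc (0:ℝ) 1, ∃ n : ℤ, (φ t).im = Real.pi + 2 * Real.pi * n := by
      intro t ht
      set r : ℝ := (1 - (α t) 2) / (1 + (α t) 2) with hr
      have hrpos : 0 < r := div_pos (by linarith [(hαbd t).1]) (by linarith [(hαbd t).2])
      have hne : ACsig (α t) ≠ 0 := AC_sig_ne_zero (hαn t) (hαbd t).1 (hαbd t).2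
      have hexp : Complex.exp (φ t) = -((r : ℝ) : ℂ) := by
        show Complex.exp (θf 0 (t + 1) - θf 0 t) = _
        rw [Complex.exp_sub, hθ0l, hθ0l]
        have hB1 : B (t + 1) = -α t := by rw [add_comm]; exact hBsecond t ht.1 ht.2
        have hBt : B t = α t := hBfirst t ht.1 ht.2
        show ACsig (B (t + 1)) / ACsig (B t) = _
        rw [hB1, hBt, AC_sig_neg (hαbd t).1 (hαbd t).2]
        rw [mul_div_assoc, div_self hne, mul_one, hr]
      have hrf : -((r : ℝ) : ℂ) = Complex.exp ((Real.log r : ℂ) + Real.pi * Complex.I) := by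
        rw [Complex.exp_add, Complex.exp_pi_mul_I, ← Complex.ofReal_exp, Real.exp_log hrpos]
        ring
      rw [hrf] at hexp
      obtain ⟨n, hn⟩ := Complex.exp_eq_exp_iff_exists_int.mp hexp
      refine ⟨n, ?_⟩
      rw [hn]
      simp [Complex.add_im, Complex.mul_im]
      ring
    have hint : ∀ t ∈ Icc (0:ℝ) 1, ∃ n : ℤ, ((φ t).im - Real.pi) / (2 * Real.pi) = n := by
      intro t ht
      obtain ⟨n, hn⟩ := hkey t ht
      refine ⟨n, ?_⟩
      rw [hn]
      field_simp
      ring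
    have hψcont : Continuous fun t => ((φ t).im - Real.pi) / (2 * Real.pi) :=
      ((Complex.continuous_im.comp hφc).sub continuous_const).div_const _
    have heq := AC_int_const hψcont (by norm_num : (0:ℝ) ≤ 1) hint
    have hφeq : (φ 0).im = (φ 1).im := by
      have hpi : (2 * Real.pi) ≠ 0 := by positivity
      field_simp at heq
      linarith
    obtain ⟨n₀, hn₀⟩ := hkey 0 ⟨le_refl 0, by norm_num⟩
    have hω0v : ω 0 = (φ 1).im + (φ 0).im := by
      show (θf 0 2 - θf 0 0).im = _
      have e2 : (1:ℝ) + 1 = 2 := by norm_num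
      show _ = (θf 0 (1 + 1) - θf 0 1).im + (θf 0 (0 + 1) - θf 0 0).im
      rw [e2]
      norm_num
    intro hzero
    rw [hω0v, ← hφeq, hn₀] at hzero
    have hsum : Real.pi * (2 + 4 * (n₀ : ℝ)) = 0 := by linarith
    rcases mul_eq_zero.mp hsum with h | h
    · exact Real.pi_ne_zero h
    · have h2 : (2 + 4 * (n₀:ℤ) : ℝ) = 0 := by push_cast; linarith
      have h3 : (2 + 4 * n₀ : ℤ) = 0 := by exact_mod_cast h2
      omega
  exact hωne (by rw [← hconst, hωs₂])

/-- Two closed (periodic continuous) antipodal curves on the 2-sphere intersect. -/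
theorem antipodal_curves_intersect (f g : ℝ → EuclideanSpace ℝ (Fin 3))
    (hf : Continuous f) (hg : Continuous g)
    (hfs : ∀ t, ‖f t‖ = 1) (hgs : ∀ t, ‖g t‖ = 1)
    (hfp : ∀ t, f (t + 1) = f t) (hgp : ∀ t, g (t + 1) = g t)
    (hfa : ∀ x ∈ Set.range f, -x ∈ Set.range f)
    (hga : ∀ x ∈ Set.range g, -x ∈ Set.range g) :
    (Set.range f ∩ Set.range g).Nonempty := by
  by_contra hempty
  rw [Set.not_nonempty_iff_eq_empty] at hempty
  set p₀ : EuclideanSpace ℝ (Fin 3) := EuclideanSpace.single (2 : Fin 3) (1 : ℝ) with hp₀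
  have hp₀n : ‖p₀‖ = 1 := by rw [hp₀, EuclideanSpace.norm_single]; norm_num
  set T : EuclideanSpace ℝ (Fin 3) ≃ₗᵢ[ℝ] EuclideanSpace ℝ (Fin 3) :=
    Submodule.reflection (ℝ ∙ (g 0 - p₀))ᗮ with hT
  have hTg0 : T (g 0) = p₀ := Submodule.reflection_sub (by rw [hgs 0, hp₀n])
  apply AC_core (fun t => T (f t)) (fun t => T (g t))
  · exact T.continuous.comp hf
  · exact T.continuous.comp hg
  · intro t; rw [T.norm_map]; exact hfs t
  · intro t; rw [T.norm_map]; exact hgs t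
  · rintro x ⟨t, ht⟩
    obtain ⟨t', ht'⟩ := hfa (f t) ⟨t, rfl⟩
    refine ⟨t', ?_⟩
    show T (f t') = -x
    rw [ht', map_neg]
    exact congrArg Neg.neg ht
  · rintro x ⟨t, ht⟩
    obtain ⟨t', ht'⟩ := hga (g t) ⟨t, rfl⟩
    refine ⟨t', ?_⟩
    show T (g t') = -x
    rw [ht', map_neg]
    exact congrArg Neg.neg ht
  · exact hTg0
  · intro t s hts
    have h1 : f t = g s := T.injective hts
    have h2 : f t ∈ Set.range f ∩ Set.range g := ⟨⟨t, rfl⟩, ⟨s, h1.symm⟩⟩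
    rw [hempty] at h2
    exact h2
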